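/- Suppose the geometric-mean assumption holds: β < 1 satisfies ‖FᵀG‖ ≤ β in the spectral norm. Then the preconditioned objective block X is coercive on the kernel of the preconditioned constraint block Y with constant 1 − β: for every x ∈ ℝ^{n_q+n_u} with Yx = 0, one has ⟨x, Xx⟩ ≥ (1 − β)‖x‖². -/

import Mathlib

open Matrix

/-- The vector in Euclidean space obtained by applying the matrix `M` to `x`
(matrix-vector multiplication, viewed as a map between Euclidean spaces). -/
noncomputable def mulVecE {ι κ : Type} [Fintype ι] [Fintype κ] [DecidableEq κ]
    (M : Matrix ι κ ℝ) (x : EuclideanSpace ℝ κ) : EuclideanSpace ℝ ι :=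
  Matrix.toEuclideanLin M x

/-- The spectral norm (Euclidean operator norm) of a matrix. -/
noncomputable def specNorm {ι κ : Type} [Fintype ι] [Fintype κ] [DecidableEq κ]
    (M : Matrix ι κ ℝ) : ℝ :=
  ‖LinearMap.toContinuousLinearMap (Matrix.toEuclideanLin M)‖

/-- The positive semidefinite square root of a positive semidefinite matrix, as defined in the
older Mathlib (`Matrix.PosSemidef.sqrt`, since removed). -/
noncomputable def posSemidefSqrt {n : Type} [Fintype n] [DecidableEq n] {A : Matrix n n ℝ}
    (hA : A.PosSemidef) : Matrix n n ℝ :=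
  (hA.1.eigenvectorUnitary : Matrix n n ℝ) * diagonal ((↑) ∘ (√·) ∘ hA.1.eigenvalues) *
    (star hA.1.eigenvectorUnitary : Matrix n n ℝ)

private lemma dot_transpose_mulVec {m n : Type} [Fintype m] [Fintype n]
    (M : Matrix m n ℝ) (u : n → ℝ) (w : m → ℝ) :
    u ⬝ᵥ (Mᵀ *ᵥ w) = (M *ᵥ u) ⬝ᵥ w := by
  rw [dotProduct_mulVec, vecMul_transpose]

/-- Under the geometric-mean bound `‖FᵀG‖ ≤ β < 1`, the preconditioned objective
block `X` is coercive with constant `1 − β` on the kernel of `Y = [F G]`. -/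
theorem stmt3
    (nq nu nobs : ℕ) (α ρ : ℝ) (hα : 0 < α) (hρ : 0 < ρ)
    (R : Matrix (Fin nq) (Fin nq) ℝ) (T : Matrix (Fin nu) (Fin nq) ℝ)
    (A : Matrix (Fin nu) (Fin nu) ℝ) (B : Matrix (Fin nobs) (Fin nu) ℝ)
    (hR : IsUnit R.det) (hA : IsUnit A.det)
    (hSR : ((α / ρ) • (Rᵀ * R) + Tᵀ * T).PosDef)
    (hSA : ((1 / ρ) • (Bᵀ * B) + Aᵀ * A).PosDef)
    (F : Matrix (Fin nu) (Fin nq) ℝ) (hF : F = T * (posSemidefSqrt hSR.posSemidef)⁻¹)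
    (G : Matrix (Fin nu) (Fin nu) ℝ) (hG : G = A * (posSemidefSqrt hSA.posSemidef)⁻¹)
    (X : Matrix (Fin nq ⊕ Fin nu) (Fin nq ⊕ Fin nu) ℝ)
    (hX : X = fromBlocks (1 - Fᵀ * F) 0 0 (1 - Gᵀ * G))
    (Y : Matrix (Fin nu) (Fin nq ⊕ Fin nu) ℝ)
    (hY : Y = fromCols F G)
    (β : ℝ) (hβ1 : β < 1) (hβ : specNorm (Fᵀ * G) ≤ β) :
    ∀ x : EuclideanSpace ℝ (Fin nq ⊕ Fin nu),
      mulVecE Y x = 0 → (1 - β) * ‖x‖ ^ 2 ≤ inner ℝ x (mulVecE X x) := by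
  intro x hx
  set a : EuclideanSpace ℝ (Fin nq) := WithLp.toLp 2 (fun i => x (Sum.inl i)) with ha
  set b : EuclideanSpace ℝ (Fin nu) := WithLp.toLp 2 (fun i => x (Sum.inr i)) with hb
  have hxe : (x : (Fin nq ⊕ Fin nu) → ℝ) = Sum.elim (a : Fin nq → ℝ) (b : Fin nu → ℝ) := by
    funext i; cases i <;> rfl
  -- constraint
  have h1 : F *ᵥ (a : Fin nq → ℝ) + G *ᵥ (b : Fin nu → ℝ) = 0 := by
    have h : Y *ᵥ (x : (Fin nq ⊕ Fin nu) → ℝ) = 0 := congrArg WithLp.ofLp hx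
    rwa [hxe, hY, fromCols_mulVec_sumElim] at h
  have hqp : G *ᵥ (b : Fin nu → ℝ) = -(F *ᵥ (a : Fin nq → ℝ)) := by
    rw [add_comm] at h1; exact eq_neg_of_add_eq_zero_left h1
  -- quadratic form identity
  have h2 : (inner ℝ x (mulVecE X x) : ℝ)
      = (a : Fin nq → ℝ) ⬝ᵥ (a : Fin nq → ℝ) - (F *ᵥ a) ⬝ᵥ (F *ᵥ a)
        + ((b : Fin nu → ℝ) ⬝ᵥ (b : Fin nu → ℝ) - (G *ᵥ b) ⬝ᵥ (G *ᵥ b)) := by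
    have h : (inner ℝ x (mulVecE X x) : ℝ)
        = (x : (Fin nq ⊕ Fin nu) → ℝ) ⬝ᵥ (X *ᵥ (x : (Fin nq ⊕ Fin nu) → ℝ)) := by
      rw [EuclideanSpace.inner_eq_star_dotProduct, dotProduct_comm]; rfl
    rw [h, hxe, hX, fromBlocks_mulVec, sumElim_dotProduct_sumElim]
    simp only [Sum.elim_comp_inl, Sum.elim_comp_inr, zero_mulVec, add_zero, zero_add,
      sub_mulVec, one_mulVec, dotProduct_sub, ← mulVec_mulVec]
    rw [dot_transpose_mulVec F, dot_transpose_mulVec G]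
  -- norm identities
  have h3 : ‖x‖ ^ 2 = (a : Fin nq → ℝ) ⬝ᵥ (a : Fin nq → ℝ)
      + (b : Fin nu → ℝ) ⬝ᵥ (b : Fin nu → ℝ) := by
    rw [← real_inner_self_eq_norm_sq x]
    show (x : (Fin nq ⊕ Fin nu) → ℝ) ⬝ᵥ (x : (Fin nq ⊕ Fin nu) → ℝ) = _
    rw [hxe, sumElim_dotProduct_sumElim]
  have hna : (a : Fin nq → ℝ) ⬝ᵥ (a : Fin nq → ℝ) = ‖a‖ ^ 2 := real_inner_self_eq_norm_sq a
  have hnb : (b : Fin nu → ℝ) ⬝ᵥ (b : Fin nu → ℝ) = ‖b‖ ^ 2 := real_inner_self_eq_norm_sq b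
  -- cross term
  have h4 : (F *ᵥ (a : Fin nq → ℝ)) ⬝ᵥ (G *ᵥ (b : Fin nu → ℝ))
      = (a : Fin nq → ℝ) ⬝ᵥ ((Fᵀ * G) *ᵥ (b : Fin nu → ℝ)) := by
    rw [← mulVec_mulVec, dot_transpose_mulVec F]
  have h5 : |(a : Fin nq → ℝ) ⬝ᵥ ((Fᵀ * G) *ᵥ (b : Fin nu → ℝ))| ≤ β * (‖a‖ * ‖b‖) := by
    have hie : (a : Fin nq → ℝ) ⬝ᵥ ((Fᵀ * G) *ᵥ (b : Fin nu → ℝ))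
        = (inner ℝ a (mulVecE (Fᵀ * G) b) : ℝ) := by
      rw [EuclideanSpace.inner_eq_star_dotProduct, dotProduct_comm]; rfl
    rw [hie]
    calc |(inner ℝ a (mulVecE (Fᵀ * G) b) : ℝ)| ≤ ‖a‖ * ‖mulVecE (Fᵀ * G) b‖ :=
          abs_real_inner_le_norm _ _
      _ ≤ ‖a‖ * (specNorm (Fᵀ * G) * ‖b‖) := by
          refine mul_le_mul_of_nonneg_left ?_ (norm_nonneg _)
          exact (LinearMap.toContinuousLinearMap (Matrix.toEuclideanLin (Fᵀ * G))).le_opNorm b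
      _ = specNorm (Fᵀ * G) * (‖a‖ * ‖b‖) := by ring
      _ ≤ β * (‖a‖ * ‖b‖) :=
          mul_le_mul_of_nonneg_right hβ (mul_nonneg (norm_nonneg a) (norm_nonneg b))
  have hβ0 : (0 : ℝ) ≤ β := le_trans (norm_nonneg _) hβ
  have hqq : (G *ᵥ (b : Fin nu → ℝ)) ⬝ᵥ (G *ᵥ (b : Fin nu → ℝ))
      = (F *ᵥ (a : Fin nq → ℝ)) ⬝ᵥ (F *ᵥ (a : Fin nq → ℝ)) := by rw [hqp]; simp
  have hpq : (F *ᵥ (a : Fin nq → ℝ)) ⬝ᵥ (G *ᵥ (b : Fin nu → ℝ))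
      = -((F *ᵥ (a : Fin nq → ℝ)) ⬝ᵥ (F *ᵥ (a : Fin nq → ℝ))) := by rw [hqp]; simp
  have habs := abs_le.mp h5
  rw [h2, h3, hna, hnb, hqq]
  rw [hpq] at h4
  nlinarith [sq_nonneg (‖a‖ - ‖b‖), habs.1, habs.2, sq_nonneg (‖a‖ + ‖b‖)]
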